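/- Let (A, δ, γ, α) be a cocommutative Hom-Poisson coalgebra and (M, Δ, Γ, β) a Hom-Poisson comodule over it. Then Δ̃ = (α²⊗Id_M)∘Δ and Γ̃ = (α²⊗Id_M)∘Γ are structure maps of another Hom-Poisson comodule structure on (M, β). -/
import Mathlib


open TensorProduct

/-- Flip on a tensor product. -/
noncomputable def tauT (K A B : Type*) [Field K] [AddCommGroup A] [Module K A]
    [AddCommGroup B] [Module K B] : A ⊗[K] B →ₗ[K] B ⊗[K] A :=
  (TensorProduct.comm K A B).toLinearMap

/-- Cyclic permutation x₁⊗x₂⊗x₃ ↦ x₃⊗x₁⊗x₂ on A⊗(A⊗A). -/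
noncomputable def cyc (K A : Type*) [Field K] [AddCommGroup A] [Module K A] :
    A ⊗[K] (A ⊗[K] A) →ₗ[K] A ⊗[K] (A ⊗[K] A) :=
  (TensorProduct.comm K (A ⊗[K] A) A).toLinearMap ∘ₗ
    (TensorProduct.assoc K A A A).symm.toLinearMap

/-- τ⊗Id acting on the first two factors of A⊗(A⊗M). -/
noncomputable def swap12 (K A M : Type*) [Field K] [AddCommGroup A] [Module K A]
    [AddCommGroup M] [Module K M] : A ⊗[K] (A ⊗[K] M) →ₗ[K] A ⊗[K] (A ⊗[K] M) :=
  (TensorProduct.assoc K A A M).toLinearMap ∘ₗ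
    TensorProduct.map (tauT K A A) LinearMap.id ∘ₗ
      (TensorProduct.assoc K A A M).symm.toLinearMap

section Aux

variable {K A M : Type*} [Field K] [AddCommGroup A] [Module K A]
  [AddCommGroup M] [Module K M]

lemma assoc_nat (f g : A →ₗ[K] A) (h : M →ₗ[K] M) :
    (TensorProduct.assoc K A A M).toLinearMap ∘ₗ TensorProduct.map (TensorProduct.map f g) h =
      TensorProduct.map f (TensorProduct.map g h) ∘ₗ (TensorProduct.assoc K A A M).toLinearMap := by
  apply TensorProduct.ext_threefold
  intros; simp

lemma swap12_nat (f g : A →ₗ[K] A) (h : M →ₗ[K] M) :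
    swap12 K A M ∘ₗ TensorProduct.map f (TensorProduct.map g h) =
      TensorProduct.map g (TensorProduct.map f h) ∘ₗ swap12 K A M := by
  ext a b m
  simp [swap12, tauT]

end Aux

/-- Comodule over a Hom-coassociative coalgebra (C, δ, α). -/
def IsHomComodule (K C M : Type*) [Field K] [AddCommGroup C] [Module K C]
    [AddCommGroup M] [Module K M] (δ : C →ₗ[K] C ⊗[K] C) (α : C →ₗ[K] C)
    (Δ : M →ₗ[K] C ⊗[K] M) (β : M →ₗ[K] M) : Prop :=
  Δ ∘ₗ β = TensorProduct.map α β ∘ₗ Δ ∧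
  TensorProduct.map α Δ ∘ₗ Δ =
    (TensorProduct.assoc K C C M).toLinearMap ∘ₗ TensorProduct.map δ β ∘ₗ Δ

/-- Comodule over a Hom-Lie coalgebra (L, γ, α). -/
def IsHomLieComodule (K L M : Type*) [Field K] [AddCommGroup L] [Module K L]
    [AddCommGroup M] [Module K M] (γ : L →ₗ[K] L ⊗[K] L) (α : L →ₗ[K] L)
    (Γ : M →ₗ[K] L ⊗[K] M) (β : M →ₗ[K] M) : Prop :=
  Γ ∘ₗ β = TensorProduct.map α β ∘ₗ Γ ∧
  (TensorProduct.assoc K L L M).toLinearMap ∘ₗ TensorProduct.map γ β ∘ₗ Γ =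
    TensorProduct.map α Γ ∘ₗ Γ - swap12 K L M ∘ₗ TensorProduct.map α Γ ∘ₗ Γ

/-- Hom-Poisson comodule over (A, δ, γ, α). -/
def IsHomPoissonComodule (K A M : Type*) [Field K] [AddCommGroup A] [Module K A]
    [AddCommGroup M] [Module K M] (δ γ : A →ₗ[K] A ⊗[K] A) (α : A →ₗ[K] A)
    (Δ Γ : M →ₗ[K] A ⊗[K] M) (β : M →ₗ[K] M) : Prop :=
  IsHomComodule K A M δ α Δ β ∧
  IsHomLieComodule K A M γ α Γ β ∧
  TensorProduct.map α Δ ∘ₗ Γ =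
    (TensorProduct.assoc K A A M).toLinearMap ∘ₗ TensorProduct.map γ β ∘ₗ Δ +
      swap12 K A M ∘ₗ TensorProduct.map α Γ ∘ₗ Δ ∧
  (TensorProduct.assoc K A A M).toLinearMap ∘ₗ TensorProduct.map δ β ∘ₗ Γ =
    TensorProduct.map α Γ ∘ₗ Δ + swap12 K A M ∘ₗ TensorProduct.map α Γ ∘ₗ Δ

/-- Cocommutative Hom-Poisson coalgebra. -/
def IsCocommHomPoissonCoalgebra (K A : Type*) [Field K] [AddCommGroup A] [Module K A]
    (δ γ : A →ₗ[K] A ⊗[K] A) (α : A →ₗ[K] A) : Prop :=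
  δ = tauT K A A ∘ₗ δ ∧
  δ ∘ₗ α = TensorProduct.map α α ∘ₗ δ ∧
  TensorProduct.map α δ ∘ₗ δ =
    (TensorProduct.assoc K A A A).toLinearMap ∘ₗ TensorProduct.map δ α ∘ₗ δ ∧
  γ = -(tauT K A A ∘ₗ γ) ∧
  γ ∘ₗ α = TensorProduct.map α α ∘ₗ γ ∧
  (LinearMap.id + cyc K A + cyc K A ∘ₗ cyc K A) ∘ₗ TensorProduct.map α γ ∘ₗ γ = 0 ∧
  TensorProduct.map α δ ∘ₗ γ =
    (TensorProduct.assoc K A A A).toLinearMap ∘ₗ TensorProduct.map γ α ∘ₗ δ +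
      swap12 K A A ∘ₗ TensorProduct.map α γ ∘ₗ δ

theorem stmt18 {K A M : Type*} [Field K] [CharZero K] [AddCommGroup A] [Module K A]
    [AddCommGroup M] [Module K M]
    (δ γ : A →ₗ[K] A ⊗[K] A) (α : A →ₗ[K] A)
    (hA : IsCocommHomPoissonCoalgebra K A δ γ α)
    (Δ Γ : M →ₗ[K] A ⊗[K] M) (β : M →ₗ[K] M)
    (hM : IsHomPoissonComodule K A M δ γ α Δ Γ β) :
    IsHomPoissonComodule K A M δ γ α
      (TensorProduct.map (α ∘ₗ α) LinearMap.id ∘ₗ Δ)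
      (TensorProduct.map (α ∘ₗ α) LinearMap.id ∘ₗ Γ) β := by
  classical
  obtain ⟨hcoc, hδα, hcoa, hanti, hγα, hjac, hcoL⟩ := hA
  obtain ⟨⟨h1, h2⟩, ⟨h3, h4⟩, h5, h6⟩ := hM
  set sq : A →ₗ[K] A := α ∘ₗ α with hsq
  set F : A ⊗[K] M →ₗ[K] A ⊗[K] M := TensorProduct.map sq LinearMap.id with hF
  set H : A ⊗[K] (A ⊗[K] M) →ₗ[K] A ⊗[K] (A ⊗[K] M) :=
    TensorProduct.map sq (TensorProduct.map sq LinearMap.id) with hH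
  have key1 : ∀ (Ψ : M →ₗ[K] A ⊗[K] M), Ψ ∘ₗ β = TensorProduct.map α β ∘ₗ Ψ →
      (F ∘ₗ Ψ) ∘ₗ β = TensorProduct.map α β ∘ₗ (F ∘ₗ Ψ) := by
    intro Ψ hΨ
    calc (F ∘ₗ Ψ) ∘ₗ β = F ∘ₗ (Ψ ∘ₗ β) := by rw [LinearMap.comp_assoc]
      _ = TensorProduct.map (sq ∘ₗ α) (LinearMap.id ∘ₗ β) ∘ₗ Ψ := by
            rw [hΨ, ← LinearMap.comp_assoc, TensorProduct.map_comp]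
      _ = TensorProduct.map (α ∘ₗ sq) (β ∘ₗ LinearMap.id) ∘ₗ Ψ := by
            rw [hsq, LinearMap.comp_assoc α α α, LinearMap.id_comp, LinearMap.comp_id]
      _ = TensorProduct.map α β ∘ₗ (F ∘ₗ Ψ) := by
            rw [TensorProduct.map_comp, LinearMap.comp_assoc]
  have key2 : ∀ (Ψ Φ : M →ₗ[K] A ⊗[K] M),
      TensorProduct.map α (F ∘ₗ Φ) ∘ₗ (F ∘ₗ Ψ) = H ∘ₗ (TensorProduct.map α Φ ∘ₗ Ψ) := by
    intro Ψ Φ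
    calc TensorProduct.map α (F ∘ₗ Φ) ∘ₗ (F ∘ₗ Ψ)
        = (TensorProduct.map α (F ∘ₗ Φ) ∘ₗ TensorProduct.map sq LinearMap.id) ∘ₗ Ψ := by
          rw [LinearMap.comp_assoc]
      _ = TensorProduct.map (α ∘ₗ sq) ((F ∘ₗ Φ) ∘ₗ LinearMap.id) ∘ₗ Ψ := by
          rw [TensorProduct.map_comp]
      _ = TensorProduct.map (sq ∘ₗ α) (F ∘ₗ Φ) ∘ₗ Ψ := by
          rw [LinearMap.comp_id, hsq, LinearMap.comp_assoc α α α]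
      _ = H ∘ₗ (TensorProduct.map α Φ ∘ₗ Ψ) := by
          rw [hH, hF, TensorProduct.map_comp, LinearMap.comp_assoc]
  have key3 : ∀ (θ : A →ₗ[K] A ⊗[K] A), θ ∘ₗ α = TensorProduct.map α α ∘ₗ θ →
      ∀ (Ψ : M →ₗ[K] A ⊗[K] M),
      (TensorProduct.assoc K A A M).toLinearMap ∘ₗ TensorProduct.map θ β ∘ₗ (F ∘ₗ Ψ) =
        H ∘ₗ ((TensorProduct.assoc K A A M).toLinearMap ∘ₗ TensorProduct.map θ β ∘ₗ Ψ) := by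
    intro θ hθ Ψ
    have hθsq : θ ∘ₗ sq = TensorProduct.map sq sq ∘ₗ θ := by
      rw [hsq, ← LinearMap.comp_assoc, hθ, LinearMap.comp_assoc, hθ,
        ← LinearMap.comp_assoc, ← TensorProduct.map_comp]
    calc (TensorProduct.assoc K A A M).toLinearMap ∘ₗ TensorProduct.map θ β ∘ₗ (F ∘ₗ Ψ)
        = (TensorProduct.assoc K A A M).toLinearMap ∘ₗ
            (TensorProduct.map θ β ∘ₗ TensorProduct.map sq LinearMap.id) ∘ₗ Ψ := by
          rw [LinearMap.comp_assoc]
      _ = (TensorProduct.assoc K A A M).toLinearMap ∘ₗ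
            TensorProduct.map (θ ∘ₗ sq) (β ∘ₗ LinearMap.id) ∘ₗ Ψ := by
          rw [TensorProduct.map_comp]
      _ = (TensorProduct.assoc K A A M).toLinearMap ∘ₗ
            TensorProduct.map (TensorProduct.map sq sq ∘ₗ θ) (LinearMap.id ∘ₗ β) ∘ₗ Ψ := by
          rw [hθsq, LinearMap.comp_id, LinearMap.id_comp]
      _ = ((TensorProduct.assoc K A A M).toLinearMap ∘ₗ
            TensorProduct.map (TensorProduct.map sq sq) LinearMap.id) ∘ₗ
              TensorProduct.map θ β ∘ₗ Ψ := by
          rw [TensorProduct.map_comp, LinearMap.comp_assoc, LinearMap.comp_assoc]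
      _ = H ∘ₗ ((TensorProduct.assoc K A A M).toLinearMap ∘ₗ TensorProduct.map θ β ∘ₗ Ψ) := by
          rw [assoc_nat, hH, LinearMap.comp_assoc]
  have key4 : swap12 K A M ∘ₗ H = H ∘ₗ swap12 K A M := swap12_nat sq sq LinearMap.id
  have hsw : ∀ (X : M →ₗ[K] A ⊗[K] (A ⊗[K] M)),
      H ∘ₗ (swap12 K A M ∘ₗ X) = swap12 K A M ∘ₗ (H ∘ₗ X) := by
    intro X
    rw [← LinearMap.comp_assoc, ← key4, LinearMap.comp_assoc]
  refine ⟨⟨key1 Δ h1, ?_⟩, ⟨key1 Γ h3, ?_⟩, ?_, ?_⟩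
  · rw [key2, h2, key3 δ hδα Δ]
  · rw [key3 γ hγα Γ, h4, key2, LinearMap.comp_sub, hsw]
  · rw [key2, h5, LinearMap.comp_add, key3 γ hγα Δ, hsw, key2 Δ Γ]
  · rw [key3 δ hδα Γ, h6, key2, LinearMap.comp_add, hsw]
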